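/- arXiv:1209.6340 — 2 statements merged into one kernel-verified Lean document; each statement's English description precedes it below -/
import Mathlib

section
/- Let H and H' be nonzero finite-dimensional complex inner product spaces, let B : H → H and A : H' → H' be self-adjoint linear maps, and list their eigenvalues with multiplicity in increasing order: λ_1^B ≤ … ≤ λ_{dim H}^B and λ_1^A ≤ … ≤ λ_{dim H'}^A. Let E ∈ ℝ and let Π : H → H be the orthogonal projection onto the span of the eigenvectors of B with eigenvalue at most E. Let U : H → H' be a linear map and suppose there exist constants C > 0 and c ∈ (0,1) such that ‖(U* A U − B) ∘ Π‖ ≤ C and ‖U* U ∘ Π − Π‖ ≤ c in operator norm, where U* denotes the adjoint of U. Then for every index j with 1 ≤ j ≤ dim H, λ_j^B ≤ E, and λ_j^B + C ≥ 0, one has j ≤ dim H' and λ_j^A ≤ (λ_j^B + C)(1 + c/(1−c)). -/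
open scoped ComplexOrder
open ComplexConjugate

lemma quad_expand {n : ℕ} {H : Type} [NormedAddCommGroup H] [InnerProductSpace ℂ H]
    (T : H →L[ℂ] H) (lam : Fin n → ℝ) (v : OrthonormalBasis (Fin n) ℂ H)
    (hv : ∀ i, T (v i) = (lam i : ℂ) • v i) (x : H) :
    (inner ℂ x (T x) : ℂ) = ((∑ i, lam i * ‖(inner ℂ (v i) x : ℂ)‖ ^ 2 : ℝ) : ℂ) := by
  conv_lhs => rw [← v.sum_repr' x]
  rw [map_sum]
  simp only [map_smul, hv, ContinuousLinearMap.coe_smul', Pi.smul_apply]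
  rw [inner_sum]
  push_cast
  refine Finset.sum_congr rfl fun i _ => ?_
  rw [smul_smul, inner_smul_right]
  have hrw : (inner ℂ (∑ i, (inner ℂ (v i) x : ℂ) • v i) (v i) : ℂ)
      = conj (inner ℂ (v i) x : ℂ) := by
    rw [v.sum_repr' x, ← inner_conj_symm]
  rw [hrw]
  have : (inner ℂ (v i) x : ℂ) * (lam i : ℂ) * conj (inner ℂ (v i) x : ℂ) =
      (lam i : ℂ) * ((inner ℂ (v i) x : ℂ) * conj (inner ℂ (v i) x : ℂ)) := by ring
  rw [this, RCLike.mul_conj]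
  show (lam i : ℂ) * (Complex.ofReal ‖(inner ℂ (v i) x : ℂ)‖) ^ 2 = _
  ring

lemma parseval {n : ℕ} {H : Type} [NormedAddCommGroup H] [InnerProductSpace ℂ H]
    (v : OrthonormalBasis (Fin n) ℂ H) (x : H) :
    ‖x‖ ^ 2 = ∑ i, ‖(inner ℂ (v i) x : ℂ)‖ ^ 2 := by
  have h := quad_expand (ContinuousLinearMap.id ℂ H) (fun _ => (1 : ℝ)) v
    (fun i => by simp) x
  simp only [ContinuousLinearMap.id_apply, one_mul] at h
  have h2 : ((inner ℂ x x : ℂ)).re = ∑ i, ‖(inner ℂ (v i) x : ℂ)‖ ^ 2 := by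
    rw [h, Complex.ofReal_re]
  rw [← h2, ← inner_self_eq_norm_sq (𝕜 := ℂ) x, RCLike.re_to_complex]

lemma quad_re {n : ℕ} {H : Type} [NormedAddCommGroup H] [InnerProductSpace ℂ H]
    (T : H →L[ℂ] H) (lam : Fin n → ℝ) (v : OrthonormalBasis (Fin n) ℂ H)
    (hv : ∀ i, T (v i) = (lam i : ℂ) • v i) (x : H) :
    (inner ℂ x (T x) : ℂ).re = ∑ i, lam i * ‖(inner ℂ (v i) x : ℂ)‖ ^ 2 := by
  rw [quad_expand T lam v hv x, Complex.ofReal_re]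

lemma quad_le {n : ℕ} {H : Type} [NormedAddCommGroup H] [InnerProductSpace ℂ H]
    (T : H →L[ℂ] H) (lam : Fin n → ℝ) (v : OrthonormalBasis (Fin n) ℂ H)
    (hv : ∀ i, T (v i) = (lam i : ℂ) • v i) (hm : Monotone lam) (j : Fin n) (x : H)
    (hx : ∀ i : Fin n, j < i → (inner ℂ (v i) x : ℂ) = 0) :
    (inner ℂ x (T x) : ℂ).re ≤ lam j * ‖x‖ ^ 2 := by
  rw [quad_re T lam v hv x, parseval v x, Finset.mul_sum]
  refine Finset.sum_le_sum fun i _ => ?_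
  rcases le_or_gt i j with h | h
  · exact mul_le_mul_of_nonneg_right (hm h) (by positivity)
  · rw [hx i h]; simp

lemma quad_ge {n : ℕ} {H : Type} [NormedAddCommGroup H] [InnerProductSpace ℂ H]
    (T : H →L[ℂ] H) (lam : Fin n → ℝ) (v : OrthonormalBasis (Fin n) ℂ H)
    (hv : ∀ i, T (v i) = (lam i : ℂ) • v i) (hm : Monotone lam) (j : Fin n) (x : H)
    (hx : ∀ i : Fin n, i < j → (inner ℂ (v i) x : ℂ) = 0) :
    lam j * ‖x‖ ^ 2 ≤ (inner ℂ x (T x) : ℂ).re := by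
  rw [quad_re T lam v hv x, parseval v x, Finset.mul_sum]
  refine Finset.sum_le_sum fun i _ => ?_
  rcases le_or_gt j i with h | h
  · exact mul_le_mul_of_nonneg_right (hm h) (by positivity)
  · rw [hx i h]; simp

lemma inner_self_re {H : Type} [NormedAddCommGroup H] [InnerProductSpace ℂ H]
    (y : H) : (inner ℂ y y : ℂ).re = ‖y‖ ^ 2 := by
  rw [← inner_self_eq_norm_sq (𝕜 := ℂ) y, RCLike.re_to_complex]

lemma re_inner_bound {H : Type} [NormedAddCommGroup H] [InnerProductSpace ℂ H]
    (T : H →L[ℂ] H) (x : H) : |(inner ℂ x (T x) : ℂ).re| ≤ ‖T‖ * ‖x‖ ^ 2 := by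
  calc |(inner ℂ x (T x) : ℂ).re| ≤ ‖(inner ℂ x (T x) : ℂ)‖ := by
        exact Complex.abs_re_le_norm _
    _ ≤ ‖x‖ * ‖T x‖ := norm_inner_le_norm x (T x)
    _ ≤ ‖x‖ * (‖T‖ * ‖x‖) :=
        mul_le_mul_of_nonneg_left (T.le_opNorm x) (norm_nonneg x)
    _ = ‖T‖ * ‖x‖ ^ 2 := by ring

set_option maxHeartbeats 1000000 in
/-- Min-max comparison lemma for the low-lying eigenvalues of two self-adjoint
operators on nonzero finite-dimensional complex inner ℂ product spaces, intertwined by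
an approximately unitary map.  The eigenvalues `lamB`, `lamA` are listed in increasing
order with multiplicity (encoded by orthonormal eigenbases), `P` is the spectral
projection of `B` onto energies `≤ E`. -/
theorem stmt_9
    (H H' : Type) [NormedAddCommGroup H] [InnerProductSpace ℂ H]
    [NormedAddCommGroup H'] [InnerProductSpace ℂ H']
    [FiniteDimensional ℂ H] [FiniteDimensional ℂ H']
    [Nontrivial H] [Nontrivial H']
    (B : H →L[ℂ] H) (A : H' →L[ℂ] H')
    (hB : IsSelfAdjoint B) (hA : IsSelfAdjoint A)
    (nB nA : ℕ) (hnB : Module.finrank ℂ H = nB) (hnA : Module.finrank ℂ H' = nA)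
    (lamB : Fin nB → ℝ) (lamA : Fin nA → ℝ)
    (hmB : Monotone lamB) (hmA : Monotone lamA)
    (vB : OrthonormalBasis (Fin nB) ℂ H)
    (hvB : ∀ i, B (vB i) = (lamB i : ℂ) • vB i)
    (vA : OrthonormalBasis (Fin nA) ℂ H')
    (hvA : ∀ i, A (vA i) = (lamA i : ℂ) • vA i)
    (E C c : ℝ) (hC : 0 < C) (hc0 : 0 < c) (hc1 : c < 1)
    (U : H →L[ℂ] H')
    (S : Submodule ℂ H)
    (hS : S = ⨆ (μ : ℝ) (_ : μ ≤ E),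
      Module.End.eigenspace (B : H →ₗ[ℂ] H) (μ : ℂ))
    (P : H →L[ℂ] H)
    (hP : P = S.subtypeL.comp (S.orthogonalProjectionOnto))
    (h1 : ‖((ContinuousLinearMap.adjoint U).comp (A.comp U) - B).comp P‖ ≤ C)
    (h2 : ‖((ContinuousLinearMap.adjoint U).comp U).comp P - P‖ ≤ c) :
    ∀ j : Fin nB, lamB j ≤ E → 0 ≤ lamB j + C →
      ∃ hj : (j : ℕ) < nA,
        lamA ⟨(j : ℕ), hj⟩ ≤ (lamB j + C) * (1 + c / (1 - c)) := by
  intro j hjE hjC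
  set k : ℕ := (j : ℕ) with hkdef
  have hk1 : k + 1 ≤ nB := j.isLt
  set f : Fin (k + 1) → H := (fun i => vB (Fin.castLE hk1 i)) with hfdef
  have honf : Orthonormal ℂ f :=
    vB.orthonormal.comp (Fin.castLE hk1) (Fin.castLE_injective hk1)
  set V : Submodule ℂ H := Submodule.span ℂ (Set.range f) with hVdef
  have hVrank : Module.finrank ℂ V = k + 1 := by
    rw [finrank_span_eq_card honf.linearIndependent, Fintype.card_fin]
  -- V ≤ S
  have hmemS : ∀ i : Fin nB, (i : ℕ) ≤ k → vB i ∈ S := by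
    intro i hi
    rw [hS]
    have h1' : vB i ∈ Module.End.eigenspace (B : H →ₗ[ℂ] H) ((lamB i : ℝ) : ℂ) := by
      rw [Module.End.mem_eigenspace_iff]
      exact hvB i
    have hle : lamB i ≤ E := le_trans (hmB (show i ≤ j from hi)) hjE
    exact Submodule.mem_iSup_of_mem (lamB i) (Submodule.mem_iSup_of_mem hle h1')
  have hVS : V ≤ S := by
    rw [hVdef, Submodule.span_le]
    rintro _ ⟨i, rfl⟩
    exact hmemS _ (Nat.lt_succ_iff.mp i.isLt)
  have hPmem : ∀ x ∈ S, P x = x := by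
    intro x hx
    rw [hP]
    simp only [ContinuousLinearMap.coe_comp', Function.comp_apply,
      Submodule.coe_subtypeL', Submodule.coe_subtype]
    exact S.starProjection_eq_self_iff.mpr hx
  -- orthogonality to high eigenvectors
  have hinner0 : ∀ i : Fin nB, k < (i : ℕ) → ∀ x ∈ V, (inner ℂ (vB i) x : ℂ) = 0 := by
    intro i hi x hx
    refine Submodule.span_induction ?_ ?_ ?_ ?_ hx
    · rintro _ ⟨i', rfl⟩
      refine vB.orthonormal.2 ?_
      intro hne
      rw [hne] at hi
      simp only [Fin.coe_castLE] at hi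
      omega
    · exact inner_zero_right _
    · intro a b _ _ ha hb
      rw [inner_add_right, ha, hb, add_zero]
    · intro r a _ ha
      rw [inner_smul_right, ha, mul_zero]
  -- estimate for A along U
  have estA : ∀ x ∈ V, (inner ℂ (U x) (A (U x)) : ℂ).re ≤ (lamB j + C) * ‖x‖ ^ 2 := by
    intro x hxV
    have hPxx : P x = x := hPmem x (hVS hxV)
    set T : H →L[ℂ] H :=
      ((ContinuousLinearMap.adjoint U).comp (A.comp U) - B).comp P with hTdef
    have happ : T x = (ContinuousLinearMap.adjoint U) (A (U x)) - B x := by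
      simp [hTdef, hPxx]
    have e1 : (inner ℂ (U x) (A (U x)) : ℂ) = inner ℂ x (B x) + inner ℂ x (T x) := by
      rw [happ, inner_sub_right, ContinuousLinearMap.adjoint_inner_right]
      ring
    rw [e1, Complex.add_re]
    have r1 : (inner ℂ x (B x) : ℂ).re ≤ lamB j * ‖x‖ ^ 2 :=
      quad_le B lamB vB hvB hmB j x (fun i hij => hinner0 i (by exact_mod_cast hij) x hxV)
    have r2 : (inner ℂ x (T x) : ℂ).re ≤ C * ‖x‖ ^ 2 := by
      have hb := re_inner_bound T x
      have := abs_le.mp hb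
      have hTle : ‖T‖ * ‖x‖ ^ 2 ≤ C * ‖x‖ ^ 2 :=
        mul_le_mul_of_nonneg_right h1 (sq_nonneg _)
      linarith [this.2]
    nlinarith [r1, r2]
  -- norm estimate for U x
  have estU : ∀ x ∈ V, (1 - c) * ‖x‖ ^ 2 ≤ ‖U x‖ ^ 2 := by
    intro x hxV
    have hPxx : P x = x := hPmem x (hVS hxV)
    set T : H →L[ℂ] H :=
      ((ContinuousLinearMap.adjoint U).comp U).comp P - P with hTdef
    have happ : (ContinuousLinearMap.adjoint U) (U x) = x + T x := by
      simp [hTdef, hPxx]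
    have e2 : (‖U x‖ ^ 2 : ℝ) = ‖x‖ ^ 2 + (inner ℂ x (T x) : ℂ).re := by
      rw [← inner_self_re (U x), ← ContinuousLinearMap.adjoint_inner_right U x (U x),
        happ, inner_add_right, Complex.add_re, inner_self_re]
    have hb := re_inner_bound T x
    have h2' : ‖T‖ * ‖x‖ ^ 2 ≤ c * ‖x‖ ^ 2 :=
      mul_le_mul_of_nonneg_right h2 (sq_nonneg _)
    have := abs_le.mp hb
    nlinarith [this.1]
  -- injectivity and rank of image
  set g : V →ₗ[ℂ] H' := (U : H →ₗ[ℂ] H').domRestrict V with hgdef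
  have hginj : Function.Injective g := by
    rw [← LinearMap.ker_eq_bot, Submodule.eq_bot_iff]
    intro x hx0
    have hUx : U (x : H) = 0 := by
      have h := hx0
      rwa [LinearMap.mem_ker, hgdef, LinearMap.domRestrict_apply,
        ContinuousLinearMap.coe_coe] at h
    have hest := estU (x : H) x.2
    rw [hUx, norm_zero] at hest
    norm_num at hest
    have hx2 : ‖(x : H)‖ ^ 2 = 0 := le_antisymm (by nlinarith) (sq_nonneg _)
    exact Subtype.ext (norm_eq_zero.mp ((pow_eq_zero_iff two_ne_zero).mp hx2))
  set W : Submodule ℂ H' := V.map (U : H →ₗ[ℂ] H') with hWdef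
  have hWrank : Module.finrank ℂ W = k + 1 := by
    have hr := LinearMap.finrank_range_of_inj hginj
    rw [LinearMap.range_domRestrict] at hr
    rw [← hWdef] at hr
    rw [hr, hVrank]
  have hj : k < nA := by
    have := Submodule.finrank_le W
    rw [hWrank, hnA] at this
    omega
  refine ⟨hj, ?_⟩
  set j' : Fin nA := ⟨k, hj⟩ with hj'def
  -- K = span of low eigenvectors of A
  set fA : Fin k → H' := (fun i => vA (Fin.castLE hj.le i)) with hfAdef
  have honfA : Orthonormal ℂ fA :=
    vA.orthonormal.comp (Fin.castLE hj.le) (Fin.castLE_injective hj.le)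
  set K : Submodule ℂ H' := Submodule.span ℂ (Set.range fA) with hKdef
  have hKrank : Module.finrank ℂ K = k := by
    rw [finrank_span_eq_card honfA.linearIndependent, Fintype.card_fin]
  have hKort : Module.finrank ℂ K + Module.finrank ℂ Kᗮ = nA := by
    rw [K.finrank_add_finrank_orthogonal, hnA]
  have hsum := Submodule.finrank_sup_add_finrank_inf_eq W Kᗮ
  have hsup : Module.finrank ℂ ↥(W ⊔ Kᗮ) ≤ nA := by
    have := Submodule.finrank_le (W ⊔ Kᗮ)
    omega
  have hpos : 0 < Module.finrank ℂ ↥(W ⊓ Kᗮ) := by omega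
  have hne : W ⊓ Kᗮ ≠ ⊥ := by
    intro h
    rw [h] at hpos
    simp at hpos
  obtain ⟨y, hyWK, hy0⟩ := Submodule.exists_mem_ne_zero_of_ne_bot hne
  obtain ⟨x, hxV, hxy⟩ := Submodule.mem_map.mp hyWK.1
  have hyUx : U x = y := hxy
  have hxne : x ≠ 0 := by
    rintro rfl
    rw [map_zero] at hyUx
    exact hy0 hyUx.symm
  have hx2pos : (0 : ℝ) < ‖x‖ ^ 2 := by
    have := norm_pos_iff.mpr hxne
    positivity
  -- lower bound via min-max
  have hortho : ∀ i : Fin nA, i < j' → (inner ℂ (vA i) (U x) : ℂ) = 0 := by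
    intro i hij
    have hik : (i : ℕ) < k := hij
    have hmemK : vA i ∈ K := by
      rw [hKdef]
      refine Submodule.subset_span ⟨⟨(i : ℕ), hik⟩, ?_⟩
      simp [hfAdef]
    rw [hyUx]
    exact (Submodule.mem_orthogonal K y).mp hyWK.2 (vA i) hmemK
  have hlow : lamA j' * ‖U x‖ ^ 2 ≤ (inner ℂ (U x) (A (U x)) : ℂ).re :=
    quad_ge A lamA vA hvA hmA j' (U x) hortho
  have hup := estA x hxV
  have hnorm := estU x hxV
  -- conclude
  have h1c : (0:ℝ) < 1 - c := by linarith
  have key : lamA j' * (1 - c) ≤ lamB j + C := by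
    rcases le_or_gt (lamA j') 0 with hneg | hposA
    · nlinarith
    · nlinarith [mul_le_mul_of_nonneg_left hnorm hposA.le]
  have hrhs : (lamB j + C) * (1 + c / (1 - c)) = (lamB j + C) / (1 - c) := by
    field_simp
    ring
  rw [hrhs, le_div_iff₀ h1c]
  exact key
end

section
/- There exist a real number E⁰ > 0 and an integer k₀ ≥ 1 such that for every integer k ≥ k₀, all eigenvalues of the Harper matrix H_k lying in the interval [−4, −4 + E⁰] are simple: if j ≠ j' and both λ_k^{(j)} ≤ −4 + E⁰ and λ_k^{(j')} ≤ −4 + E⁰, then λ_k^{(j)} ≠ λ_k^{(j')}. -/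
set_option maxHeartbeats 1000000

/-- The Harper matrix: the `2k × 2k` matrix of the Toeplitz operator quantizing
the Harper Hamiltonian `2(cos 2πp + cos 2πq)` on the torus. -/
noncomputable def harper (k : ℕ) : Matrix (Fin (2 * k)) (Fin (2 * k)) ℂ := fun i j =>
  (if j = i then ((2 * Real.cos ((i : ℕ) * Real.pi / (k : ℝ)) : ℝ) : ℂ) else 0) +
  (if ((j : ℕ) : ZMod (2 * k)) = ((i : ℕ) : ZMod (2 * k)) + 1 then 1 else 0) +
  (if ((j : ℕ) : ZMod (2 * k)) = ((i : ℕ) : ZMod (2 * k)) - 1 then 1 else 0)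

/-- `lam` is the list of eigenvalues of the (Hermitian) Harper matrix, in
increasing order and with multiplicity: it is monotone and there is a basis of
eigenvectors realizing it. -/
def HarperSortedEigs (k : ℕ) (lam : Fin (2 * k) → ℝ) : Prop :=
  Monotone lam ∧ ∃ b : Module.Basis (Fin (2 * k)) ℂ (Fin (2 * k) → ℂ),
    ∀ j, (harper k).mulVec (b j) = (lam j : ℂ) • b j

open Real

lemma harperB (k d p : ℕ) (hk : 100 ≤ k) (hd : d = k/20 + 1)
    (hp1 : k + d + 1 ≤ p) (hp2 : p + d + 1 ≤ 3*k) :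
    (1:ℝ)/100 ≤ 2 * Real.cos ((p:ℝ) * Real.pi / k) + 2 := by
  have hk0 : (0:ℝ) < k := by
    have : (0:ℕ) < k := by omega
    exact_mod_cast this
  have hk100 : (100:ℝ) ≤ k := by exact_mod_cast hk
  have hpi : (3:ℝ) < π := Real.pi_gt_three
  have hpi4 : π < 3.15 := by have := Real.pi_lt_d2; linarith
  set x : ℝ := (p:ℝ) * π / (2*k) with hx
  have h2x : (p:ℝ) * π / k = 2 * x := by rw [hx]; field_simp
  rw [h2x, Real.cos_two_mul]
  set t : ℝ := x - π with ht
  have hct : Real.cos t = - Real.cos x := by rw [ht, Real.cos_sub_pi]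
  have hdk : 20 * d ≥ k + 1 := by omega
  have hdk2 : 20 * d ≤ k + 20 := by omega
  have hdk3 : d + 1 ≤ k := by omega
  have hdR : (k:ℝ) + 1 ≤ 20 * d := by exact_mod_cast hdk
  have hdR2 : (20:ℝ) * d ≤ k + 20 := by exact_mod_cast hdk2
  set δ : ℝ := ((d:ℝ)+1) * π / (2*k) with hδ
  have hδ0 : 0 < δ := by positivity
  have hδlo : 3/40 ≤ δ := by
    rw [hδ, le_div_iff₀ (by positivity)]
    nlinarith
  have hδhi : δ ≤ 12/100 := by
    rw [hδ, div_le_iff₀ (by positivity)]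
    nlinarith
  have hpR : ((k:ℝ) + d + 1) ≤ (p:ℝ) := by exact_mod_cast hp1
  have hpR2 : (p:ℝ) ≤ 3*(k:ℝ) - (d:ℝ) - 1 := by
    have h' : ((p:ℝ) + d + 1) ≤ 3*(k:ℝ) := by exact_mod_cast hp2
    linarith
  have e1 : x = (p:ℝ) * (π/(2*k)) := by rw [hx]; ring
  have hxlo : π/2 + δ ≤ x := by
    rw [e1, show π/2 + δ = ((k:ℝ)+(d:ℝ)+1) * (π/(2*(k:ℝ))) from by rw [hδ]; field_simp; ring]
    exact mul_le_mul_of_nonneg_right hpR (by positivity)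
  have hxhi : x ≤ 3*π/2 - δ := by
    rw [e1, show 3*π/2 - δ = (3*(k:ℝ)-(d:ℝ)-1) * (π/(2*(k:ℝ))) from by rw [hδ]; field_simp; ring]
    exact mul_le_mul_of_nonneg_right hpR2 (by positivity)
  have habs : |t| ≤ π/2 - δ := by
    rw [abs_le]; constructor <;> rw [ht] <;> linarith
  have hTpi : π/2 - δ ≤ π := by linarith
  have hcos1 : Real.cos (π/2 - δ) ≤ Real.cos t := by
    rw [← Real.cos_abs t]
    exact Real.cos_le_cos_of_nonneg_of_le_pi (abs_nonneg t) hTpi habs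
  have hcosT : Real.cos (π/2 - δ) = Real.sin δ := Real.cos_pi_div_two_sub δ
  clear_value x t δ
  have hsin : (1:ℝ)/20 ≤ Real.sin δ := by
    have h3 := Real.sin_gt_sub_cube hδ0
    have hδ2 : δ^2 ≤ 144/10000 := by
      nlinarith [mul_le_mul hδhi hδhi (le_of_lt hδ0) (by norm_num : (0:ℝ) ≤ 12/100)]
    have hcube : δ^3 ≤ 144/10000 * δ := by nlinarith [mul_le_mul_of_nonneg_left hδ2 (le_of_lt hδ0)]
    linarith
  have hcost : (1:ℝ)/20 ≤ Real.cos t := by rw [hcosT] at hcos1; linarith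
  have hsq : (1:ℝ)/400 ≤ Real.cos x ^ 2 := by
    have hh : Real.cos x ^ 2 = Real.cos t ^ 2 := by rw [hct]; ring
    rw [hh]; nlinarith
  linarith


lemma harperKey (k : ℕ) (hk : 100 ≤ k) (lam : ℝ) (hlo : -4 ≤ lam) (hhi : lam ≤ -4 + 1/100)
    (y : ℕ → ℝ)
    (hrec : ∀ n : ℕ, y (n+2) = (2 * Real.cos (((n+1:ℕ):ℝ) * Real.pi / k) - lam) * y (n+1) - y n)
    (h0 : y (k + (k/20+1)) = 0) (h1 : y (k + (k/20+1) + 1) = 1)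
    (hper : ∀ n, y (n + 2*k) = y n) : False := by
  have hk0 : (0:ℝ) < k := by exact_mod_cast (by omega : 0 < k)
  have hpi : (3:ℝ) < π := Real.pi_gt_three
  set d := k/20 + 1 with hd
  set s := k + d with hs
  have hdk : d + d ≤ k := by omega
  -- coefficient bounds
  have hbound : ∀ p : ℕ, s + 1 ≤ p → p + d + 1 ≤ 3*k →
      (2:ℝ) ≤ 2*Real.cos ((p:ℝ)*π/k) - lam := by
    intro p hp1 hp2
    have := harperB k d p hk hd (by omega) hp2
    linarith
  have hbg : ∀ m : ℕ, 2*m ≤ k → (3:ℝ) ≤ 2*Real.cos (((2*k+m:ℕ):ℝ)*π/k) - lam := by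
    intro m hm
    have e : ((2*k+m:ℕ):ℝ)*π/k = (m:ℝ)*π/k + 2*π := by push_cast; field_simp; ring
    rw [e, Real.cos_add_two_pi]
    have hmk : (m:ℝ)*π/k ≤ π/2 := by
      rw [div_le_iff₀ hk0]
      have : (2:ℝ)*m ≤ k := by exact_mod_cast hm
      nlinarith
    have hge : (0:ℝ) ≤ (m:ℝ)*π/k := by positivity
    have hc : 0 ≤ Real.cos ((m:ℝ)*π/k) :=
      Real.cos_nonneg_of_mem_Icc ⟨by linarith, hmk⟩
    linarith
  have habs : ∀ p : ℝ, |2*Real.cos p - lam| ≤ 6 := by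
    intro p
    rw [abs_le]
    constructor <;> nlinarith [Real.cos_le_one p, Real.neg_one_le_cos p]
  -- monotonicity on the forbidden arc
  have hmono : ∀ m : ℕ, s + m + d + 1 ≤ 3*k → 0 ≤ y (s+m) ∧ y (s+m) ≤ y (s+m+1) := by
    intro m
    induction m with
    | zero =>
      intro _
      constructor
      · rw [Nat.add_zero, h0]
      · rw [Nat.add_zero, h0, h1]; norm_num
    | succ m ih =>
      intro hmle
      obtain ⟨ih0, ih1⟩ := ih (by omega)
      have hr := hrec (s+m)
      have hb := hbound (s+m+1) (by omega) (by omega)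
      constructor
      · show 0 ≤ y (s+m+1)
        linarith
      · show y (s+m+1) ≤ y (s+m+1+1)
        have e2 : s+m+1+1 = s+m+2 := by omega
        rw [e2, hr]
        nlinarith
  -- monotone chain
  have hchain : ∀ a m : ℕ, s ≤ a → a + m + d ≤ 3*k → y a ≤ y (a + m) := by
    intro a m
    induction m with
    | zero => intro _ _; rw [Nat.add_zero]
    | succ m ih =>
      intro ha hle
      have hstep := (hmono (a + m - s) (by omega)).2
      rw [show s + (a+m-s) = a+m from by omega] at hstep
      have := ih ha (by omega)
      have e : a + (m+1) = a + m + 1 := by omega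
      rw [e]
      linarith
  have hy1 : (1:ℝ) ≤ y (2*k) := by
    have c := hchain (s+1) (2*k - (s+1)) (by omega) (by omega)
    rw [show s+1 + (2*k - (s+1)) = 2*k from by omega, h1] at c
    exact c
  -- exponential growth
  have hgrow : ∀ m : ℕ, 2*m ≤ k → (2:ℝ)^m ≤ y (2*k + m) := by
    intro m
    induction m with
    | zero => intro _; simpa using hy1
    | succ m ih =>
      intro hm
      have ihm := ih (by omega)
      have hr := hrec (2*k + m - 1)
      rw [show 2*k+m-1+2 = 2*k+m+1 from by omega, show 2*k+m-1+1 = 2*k+m from by omega] at hr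
      have hb := hbg m (by omega)
      have hmono1 := (hmono (2*k+m-1-s) (by omega)).2
      rw [show s + (2*k+m-1-s) = 2*k+m-1 from by omega,
          show 2*k+m-1+1 = 2*k+m from by omega] at hmono1
      have hmono0 := (hmono (2*k+m-1-s) (by omega)).1
      rw [show s + (2*k+m-1-s) = 2*k+m-1 from by omega] at hmono0
      have e : 2*k + (m+1) = 2*k+m+1 := by omega
      rw [e, hr, pow_succ]
      nlinarith
  -- the max-pair sequence
  set M : ℕ → ℝ := fun n => max |y n| |y (n+1)| with hM
  have hMnonneg : ∀ n, 0 ≤ M n := fun n => le_trans (abs_nonneg _) (le_max_left _ _)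
  have hMstep : ∀ n, M n ≤ 7 * M (n+1) := by
    intro n
    have hr := hrec n
    have hb := habs (((n+1:ℕ):ℝ) * π / k)
    have hy_n : y n = (2*Real.cos (((n+1:ℕ):ℝ)*π/k) - lam) * y (n+1) - y (n+2) := by
      linarith
    have habs1 : |y (n+1)| ≤ M (n+1) := le_max_left _ _
    have habs2 : |y (n+2)| ≤ M (n+1) := le_max_right _ _
    have h1' : |y n| ≤ 7 * M (n+1) := by
      rw [hy_n]
      calc |(2*Real.cos (((n+1:ℕ):ℝ)*π/k) - lam) * y (n+1) - y (n+2)|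
          ≤ |(2*Real.cos (((n+1:ℕ):ℝ)*π/k) - lam) * y (n+1)| + |y (n+2)| := abs_sub _ _
        _ = |2*Real.cos (((n+1:ℕ):ℝ)*π/k) - lam| * |y (n+1)| + |y (n+2)| := by rw [abs_mul]
        _ ≤ 7 * M (n+1) := by nlinarith [abs_nonneg (y (n+1)), hMnonneg (n+1)]
    have h2' : |y (n+1)| ≤ 7 * M (n+1) := by
      have := hMnonneg (n+1); linarith
    exact max_le h1' h2'
  have hMchain : ∀ r n : ℕ, M n ≤ 7^r * M (n + r) := by
    intro r
    induction r with
    | zero => intro n; simp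
    | succ r ih =>
      intro n
      calc M n ≤ 7 * M (n+1) := hMstep n
        _ ≤ 7 * (7^r * M (n+1+r)) := by
            have := ih (n+1)
            nlinarith
        _ = 7^(r+1) * M (n + (r+1)) := by
            rw [show n+1+r = n+(r+1) from by omega, pow_succ]
            ring
  have hMend : M (s + 2*k) = 1 := by
    have e1 := hper s
    have e2 := hper (s+1)
    have : M (s + 2*k) = max |y (s+2*k)| |y (s+2*k+1)| := rfl
    rw [this, show s+2*k+1 = (s+1)+2*k from by omega, e1, e2, h0, h1]
    norm_num
  have hyF : (2:ℝ)^(k/2) ≤ y (3*k - d) := by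
    have g := hgrow (k/2) (by omega)
    have c := hchain (2*k + k/2) (3*k - d - (2*k + k/2)) (by omega) (by omega)
    rw [show 2*k + k/2 + (3*k - d - (2*k + k/2)) = 3*k - d from by omega] at c
    linarith
  have hMA : (2:ℝ)^(k/2) ≤ M (3*k - d - 1) := by
    have l1 : y (3*k-d) ≤ |y (3*k-d)| := le_abs_self _
    have l2 : |y (3*k - d)| ≤ M (3*k - d - 1) := by
      have : M (3*k-d-1) = max |y (3*k-d-1)| |y (3*k-d-1+1)| := rfl
      rw [this, show 3*k-d-1+1 = 3*k-d from by omega]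
      exact le_max_right _ _
    linarith
  have final := hMchain (2*d+1) (3*k - d - 1)
  rw [show (3*k-d-1) + (2*d+1) = s + 2*k from by omega, hMend, mul_one] at final
  have h7 : (7:ℝ)^(2*d+1) < 2^(3*(2*d+1)) := by
    have h78 : (7:ℝ)^(2*d+1) < 8^(2*d+1) := by
      apply pow_lt_pow_left₀ (by norm_num) (by norm_num) (by omega)
    have : (8:ℝ)^(2*d+1) = 2^(3*(2*d+1)) := by
      rw [show (8:ℝ) = 2^3 from by norm_num, ← pow_mul]
    linarith
  have hexp : 3*(2*d+1) < k/2 := by omega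
  have h2m : (2:ℝ)^(3*(2*d+1)) < 2^(k/2) := by
    exact pow_lt_pow_right₀ (by norm_num) hexp
  linarith


section plumbing

variable {k : ℕ} [NeZero (2*k)]

def fidx (z : ZMod (2*k)) : Fin (2*k) := ⟨z.val, z.val_lt⟩

lemma cast_fidx (z : ZMod (2*k)) : (((fidx z : Fin (2*k)) : ℕ) : ZMod (2*k)) = z :=
  ZMod.natCast_rightInverse z

lemma fidx_cast (j : Fin (2*k)) : fidx (((j:ℕ) : ZMod (2*k))) = j := by
  apply Fin.ext
  simp [fidx, ZMod.val_natCast, Nat.mod_eq_of_lt j.isLt]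

lemma cond_iff (j : Fin (2*k)) (z : ZMod (2*k)) :
    (((j:ℕ):ZMod (2*k)) = z) ↔ j = fidx z := by
  constructor
  · intro h; rw [← h, fidx_cast]
  · intro h; rw [h, cast_fidx]

lemma sum_indicator (c : ZMod (2*k)) (f : Fin (2*k) → ℂ) :
    (∑ j : Fin (2*k), (if ((j:ℕ):ZMod (2*k)) = c then (1:ℂ) else 0) * f j) = f (fidx c) := by
  have : ∀ j : Fin (2*k), (if ((j:ℕ):ZMod (2*k)) = c then (1:ℂ) else 0) * f j
      = if j = fidx c then f j else 0 := by
    intro j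
    by_cases h : ((j:ℕ):ZMod (2*k)) = c
    · rw [if_pos h, if_pos ((cond_iff j c).1 h), one_mul]
    · rw [if_neg h, if_neg (fun hh => h ((cond_iff j c).2 hh)), zero_mul]
  rw [Finset.sum_congr rfl (fun j _ => this j)]
  simp [Finset.sum_ite_eq']

lemma harper_mulVec (X : Fin (2*k) → ℂ) (i : Fin (2*k)) :
    (harper k).mulVec X i
      = ((2 * Real.cos ((i:ℕ) * Real.pi / k) : ℝ) : ℂ) * X i
        + X (fidx (((i:ℕ) : ZMod (2*k)) + 1)) + X (fidx (((i:ℕ):ZMod (2*k)) - 1)) := by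
  have expand : (harper k).mulVec X i
      = ∑ j : Fin (2*k), ((if j = i then ((2 * Real.cos ((i : ℕ) * Real.pi / (k : ℝ)) : ℝ) : ℂ) else 0) +
        (if ((j : ℕ) : ZMod (2 * k)) = ((i : ℕ) : ZMod (2 * k)) + 1 then 1 else 0) +
        (if ((j : ℕ) : ZMod (2 * k)) = ((i : ℕ) : ZMod (2 * k)) - 1 then 1 else 0)) * X j := rfl
  rw [expand]
  rw [Finset.sum_congr rfl (fun j _ => by rw [add_mul, add_mul])]
  rw [Finset.sum_add_distrib, Finset.sum_add_distrib, sum_indicator, sum_indicator]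
  congr 1
  congr 1
  have : ∀ j : Fin (2*k), (if j = i then ((2 * Real.cos ((i : ℕ) * Real.pi / (k : ℝ)) : ℝ) : ℂ) else 0) * X j
      = if j = i then ((2 * Real.cos ((i : ℕ) * Real.pi / (k : ℝ)) : ℝ) : ℂ) * X j else 0 := by
    intro j; split <;> simp
  rw [Finset.sum_congr rfl (fun j _ => this j)]
  simp [Finset.sum_ite_eq']

end plumbing

section eigen

variable {k : ℕ} [NeZero (2*k)] {lam : ℝ} {X : Fin (2*k) → ℂ}

/-- ZMod-indexed eigen-equation. -/
lemma harper_zmod (hX : (harper k).mulVec X = (lam : ℂ) • X) (z : ZMod (2*k)) :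
    (lam : ℂ) * X (fidx z)
      = ((2 * Real.cos ((z.val : ℝ) * Real.pi / k) : ℝ) : ℂ) * X (fidx z)
        + X (fidx (z + 1)) + X (fidx (z - 1)) := by
  have h := congrFun hX (fidx z)
  rw [harper_mulVec X (fidx z)] at h
  have e : ((fidx z : Fin (2*k)) : ℕ) = z.val := rfl
  have hval : ((z.val : ℕ) : ZMod (2*k)) = z := ZMod.natCast_rightInverse z
  rw [e, hval] at h
  simp only [Pi.smul_apply, smul_eq_mul] at h
  exact h.symm

lemma zero_prop (hX : (harper k).mulVec X = (lam : ℂ) • X) (z₀ : ZMod (2*k))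
    (e0 : X (fidx z₀) = 0) (e1 : X (fidx (z₀ + 1)) = 0) : X = 0 := by
  have key : ∀ m : ℕ, X (fidx (z₀ + (m : ZMod (2*k)))) = 0 ∧
      X (fidx (z₀ + (m : ZMod (2*k)) + 1)) = 0 := by
    intro m
    induction m with
    | zero =>
      constructor
      · simpa using e0
      · simpa using e1
    | succ m ih =>
      have hz := harper_zmod hX (z₀ + (m : ZMod (2*k)) + 1)
      rw [ih.2] at hz
      rw [show z₀ + (m : ZMod (2*k)) + 1 - 1 = z₀ + (m : ZMod (2*k)) from add_sub_cancel_right _ 1,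
        ih.1] at hz
      have hnext : X (fidx (z₀ + (m : ZMod (2*k)) + 1 + 1)) = 0 := by
        have := hz
        simp only [mul_zero, add_zero, zero_add] at this
        exact this.symm
      constructor
      · rw [show ((m + 1 : ℕ) : ZMod (2*k)) = (m : ZMod (2*k)) + 1 from by push_cast; ring,
          ← add_assoc]
        exact ih.2
      · rw [show ((m + 1 : ℕ) : ZMod (2*k)) = (m : ZMod (2*k)) + 1 from by push_cast; ring,
          ← add_assoc]
        exact hnext
  funext i
  have h := (key ((((i:ℕ) : ZMod (2*k)) - z₀).val)).1
  rw [show ((((((i:ℕ) : ZMod (2*k)) - z₀).val : ℕ)) : ZMod (2*k)) = (((i:ℕ) : ZMod (2*k)) - z₀)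
      from ZMod.natCast_rightInverse _, add_sub_cancel, fidx_cast] at h
  simpa using h

/-- Any eigenvalue is at least -4. -/
lemma harper_lam_lb (hX : (harper k).mulVec X = (lam : ℂ) • X) (hX0 : X ≠ 0) (hk : 0 < k) :
    -4 ≤ lam := by
  obtain ⟨m, -, hm⟩ := Finset.exists_max_image Finset.univ
    (fun z : ZMod (2*k) => ‖X (fidx z)‖) ⟨0, Finset.mem_univ 0⟩
  have hm' : ∀ z, ‖X (fidx z)‖ ≤ ‖X (fidx m)‖ :=
    fun z => hm z (Finset.mem_univ z)
  have hXm : X (fidx m) ≠ 0 := by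
    intro h
    apply hX0
    funext i
    have := hm' ((i:ℕ) : ZMod (2*k))
    rw [h, fidx_cast] at this
    simpa using this
  have hz := harper_zmod hX m
  set c : ℝ := 2 * Real.cos ((m.val : ℝ) * Real.pi / k) with hc
  have h2 : ((lam : ℂ) - (c : ℂ)) * X (fidx m) = X (fidx (m+1)) + X (fidx (m-1)) := by
    rw [sub_mul, hz]; ring
  have habs : ‖(lam : ℂ) - (c : ℂ)‖ * ‖X (fidx m)‖
      ≤ 2 * ‖X (fidx m)‖ := by
    rw [← norm_mul, h2]
    calc ‖X (fidx (m+1)) + X (fidx (m-1))‖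
        ≤ ‖X (fidx (m+1))‖ + ‖X (fidx (m-1))‖ := norm_add_le _ _
      _ ≤ 2 * ‖X (fidx m)‖ := by
          have := hm' (m+1); have := hm' (m-1); linarith [hm' (m+1), hm' (m-1)]
  have hpos : 0 < ‖X (fidx m)‖ := by
    rcases (norm_nonneg (X (fidx m))).lt_or_eq with h | h
    · exact h
    · exact absurd (norm_eq_zero.1 h.symm) hXm
  have h3 : ‖(lam : ℂ) - (c : ℂ)‖ ≤ 2 :=
    le_of_mul_le_mul_right (by linarith) hpos
  have h4 : |lam - c| ≤ 2 := by
    rw [show ((lam : ℂ) - (c : ℂ)) = ((lam - c : ℝ) : ℂ) from by push_cast; ring,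
      Complex.norm_real, Real.norm_eq_abs] at h3
    exact h3
  have hcb : -2 ≤ c := by
    rw [hc]; nlinarith [Real.neg_one_le_cos ((m.val : ℝ) * Real.pi / k)]
  rw [abs_le] at h4
  linarith [h4.1]

end eigen

section periodize

lemma cos_mod (k : ℕ) (hk : 0 < k) (n : ℕ) :
    Real.cos (((n % (2*k) : ℕ):ℝ) * Real.pi / k) = Real.cos ((n:ℝ) * Real.pi / k) := by
  have hk0 : (k:ℝ) ≠ 0 := by positivity
  have h := Nat.mod_add_div n (2*k)
  have hr : (n:ℝ) = ((n % (2*k) : ℕ):ℝ) + 2*(k:ℝ) * ((n / (2*k) : ℕ):ℝ) := by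
    exact_mod_cast congrArg (Nat.cast : ℕ → ℝ) h.symm
  have e : (n:ℝ) * Real.pi / k = ((n % (2*k) : ℕ):ℝ) * Real.pi / k
      + ((n / (2*k) : ℕ):ℝ) * (2*Real.pi) := by
    rw [hr]; field_simp
  rw [e, (Real.cos_periodic.nat_mul (n / (2*k))) _]

variable {k : ℕ} [NeZero (2*k)] {lam : ℝ} {X : Fin (2*k) → ℂ}

/-- ℕ-periodized eigen-recurrence. -/
lemma harper_nat (hX : (harper k).mulVec X = (lam : ℂ) • X) (hk : 0 < k) (n : ℕ) :
    (lam : ℂ) * X (fidx (((n+1 : ℕ) : ZMod (2*k))))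
      = ((2 * Real.cos (((n+1:ℕ) : ℝ) * Real.pi / k) : ℝ) : ℂ) * X (fidx (((n+1 : ℕ) : ZMod (2*k))))
        + X (fidx (((n+2 : ℕ) : ZMod (2*k)))) + X (fidx (((n : ℕ) : ZMod (2*k)))) := by
  have h := harper_zmod hX (((n+1 : ℕ) : ZMod (2*k)))
  have hval : ((((n+1 : ℕ) : ZMod (2*k))).val : ℝ) = (((n+1) % (2*k) : ℕ) : ℝ) := by
    rw [ZMod.val_natCast]
  rw [hval, cos_mod k hk (n+1)] at h
  rw [show (((n+1 : ℕ) : ZMod (2*k))) + 1 = ((n+2 : ℕ) : ZMod (2*k)) from by push_cast; ring,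
      show (((n+1 : ℕ) : ZMod (2*k))) - 1 = ((n : ℕ) : ZMod (2*k)) from by push_cast; ring] at h
  exact h

/-- an eigenvector vanishing at a prescribed point. -/
lemma exists_vanishing {u w : Fin (2*k) → ℂ}
    (hu : (harper k).mulVec u = (lam : ℂ) • u) (hw : (harper k).mulVec w = (lam : ℂ) • w)
    (hind : ∀ a c : ℂ, a • u + c • w = 0 → a = 0 ∧ c = 0) (zs : ZMod (2*k)) :
    ∃ X : Fin (2*k) → ℂ, (harper k).mulVec X = (lam : ℂ) • X ∧ X ≠ 0 ∧ X (fidx zs) = 0 := by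
  by_cases hu0 : u (fidx zs) = 0
  · refine ⟨u, hu, ?_, hu0⟩
    intro h
    have := hind 1 0 (by rw [h]; simp)
    exact one_ne_zero this.1
  · refine ⟨(u (fidx zs)) • w - (w (fidx zs)) • u, ?_, ?_, ?_⟩
    · rw [Matrix.mulVec_sub, Matrix.mulVec_smul, Matrix.mulVec_smul, hu, hw,
        smul_comm, smul_comm (w (fidx zs))]
      rw [← smul_sub]
    · intro h
      have h' : (- w (fidx zs)) • u + (u (fidx zs)) • w = 0 := by
        rw [← h]; module
      exact hu0 ((hind _ _ h').2)
    · simp [mul_comm]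

end periodize


/-- For `k` large, all eigenvalues of the Harper matrix in `[−4, −4 + E⁰]` are simple. -/
theorem stmt_15 :
    ∃ E0 : ℝ, 0 < E0 ∧ ∃ k₀ : ℕ, 1 ≤ k₀ ∧ ∀ k : ℕ, k₀ ≤ k →
      ∀ lam : Fin (2 * k) → ℝ, HarperSortedEigs k lam →
        ∀ j j' : Fin (2 * k), j ≠ j' →
          lam j ≤ -4 + E0 → lam j' ≤ -4 + E0 → lam j ≠ lam j' := by
  refine ⟨1/100, by norm_num, 100, by norm_num, ?_⟩
  intro k hk lam hSorted j j' hne hj _hj' heq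
  obtain ⟨-, b, hb⟩ := hSorted
  haveI : NeZero (2*k) := ⟨by omega⟩
  have hk0 : 0 < k := by omega
  have hu : (harper k).mulVec (b j) = ((lam j : ℝ) : ℂ) • b j := hb j
  have hw : (harper k).mulVec (b j') = ((lam j : ℝ) : ℂ) • b j' := by
    rw [heq]; exact hb j'
  -- independence of the two eigenvectors
  have hind : ∀ a c : ℂ, a • b j + c • b j' = 0 → a = 0 ∧ c = 0 := by
    intro a c h
    have li := b.linearIndependent
    have li2 := li.comp ![j, j'] (by
      intro x y hxy
      fin_cases x <;> fin_cases y <;> simp_all <;>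
        first
          | rfl
          | exact absurd hxy hne
          | exact absurd hxy.symm hne)
    have hsum : ∑ i : Fin 2, (![a, c] i) • ((⇑b ∘ ![j, j']) i) = 0 := by
      simp [Fin.sum_univ_two]
      simpa using h
    have := Fintype.linearIndependent_iff.1 li2 ![a, c] hsum
    exact ⟨this 0, this 1⟩
  -- eigenvector vanishing at s = k + (k/20+1)
  set s : ℕ := k + (k/20+1) with hs
  obtain ⟨X, hX, hX0, hXs⟩ := exists_vanishing hu hw hind ((s : ℕ) : ZMod (2*k))
  have hlb : -4 ≤ lam j := harper_lam_lb hX hX0 hk0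
  -- periodized sequence
  set x : ℕ → ℂ := fun n => X (fidx ((n : ℕ) : ZMod (2*k))) with hxdef
  have hxrec : ∀ n : ℕ, x (n+2) = ((lam j : ℝ) : ℂ) * x (n+1)
      - ((2 * Real.cos (((n+1:ℕ) : ℝ) * Real.pi / k) : ℝ) : ℂ) * x (n+1) - x n := by
    intro n
    have h := harper_nat hX hk0 n
    rw [hxdef]
    simp only []
    linear_combination -h
  have hxper : ∀ n : ℕ, x (n + 2*k) = x n := by
    intro n
    rw [hxdef]
    simp only []
    congr 2
    rw [Nat.cast_add, ZMod.natCast_self, add_zero]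
  have hxs : x s = 0 := hXs
  have hxs1 : x (s+1) ≠ 0 := by
    intro h
    apply hX0
    refine zero_prop hX ((s : ℕ) : ZMod (2*k)) hXs ?_
    have e : ((s : ℕ) : ZMod (2*k)) + 1 = (((s+1 : ℕ)) : ZMod (2*k)) := by push_cast; ring
    rw [e]
    exact h
  -- sign-flipped normalized sequence
  set D : ℂ := (-1)^(s+1) * x (s+1) with hD
  have hDne : D ≠ 0 := by
    rw [hD]
    exact mul_ne_zero (pow_ne_zero _ (by norm_num)) hxs1
  set w : ℕ → ℂ := fun n => ((-1)^n * x n) / D with hwdef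
  set y : ℕ → ℝ := fun n => (w n).re with hydef
  have hwrec : ∀ n : ℕ, w (n+2) =
      ((2 * Real.cos (((n+1:ℕ) : ℝ) * Real.pi / k) - lam j : ℝ) : ℂ) * w (n+1) - w n := by
    intro n
    rw [hwdef]
    simp only []
    rw [hxrec n]
    have e2 : ((-1 : ℂ))^(n+2) = (-1)^n := by rw [pow_add]; norm_num
    have e1 : ((-1 : ℂ))^(n+1) = -(-1)^n := by rw [pow_add]; norm_num
    rw [e2, e1]
    field_simp
    push_cast
    ring
  have hyrec : ∀ n : ℕ, y (n+2) =
      (2 * Real.cos (((n+1:ℕ):ℝ) * Real.pi / k) - lam j) * y (n+1) - y n := by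
    intro n
    rw [hydef]
    simp only []
    rw [hwrec n, Complex.sub_re]
    have e : ∀ (r : ℝ) (z : ℂ), ((r : ℂ) * z).re = r * z.re := fun r z => by
      simp only [Complex.mul_re, Complex.ofReal_re, Complex.ofReal_im]
      ring
    rw [e]
  have hy0 : y s = 0 := by
    rw [hydef, hwdef]
    simp only []
    rw [hxs]
    simp
  have hy1 : y (s+1) = 1 := by
    rw [hydef, hwdef]
    simp only []
    rw [← hD, div_self hDne]
    simp
  have hyper : ∀ n : ℕ, y (n + 2*k) = y n := by
    intro n
    rw [hydef, hwdef]
    simp only []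
    rw [hxper n]
    have e : ((-1 : ℂ))^(n + 2*k) = (-1)^n := by
      rw [pow_add, pow_mul]
      norm_num
    rw [e]
  exact harperKey k hk (lam j) hlb hj y hyrec hy0 hy1 hyper
end
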